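/- Let D be an n×n real diagonal matrix and A an n×n symmetric entrywise-nonnegative matrix such that D - A is positive definite. Then (D - A)⁻¹ is symmetric and entrywise nonnegative. -/

import Mathlib

open Matrix

theorem stmt1 (n : ℕ) (hn : 0 < n)
    (D A : Matrix (Fin n) (Fin n) ℝ)
    (hD : D.IsDiag) (hA : A.IsSymm) (hA0 : ∀ i j, 0 ≤ A i j)
    (hPD : (D - A).PosDef) :
    (D - A)⁻¹.IsSymm ∧ ∀ i j, 0 ≤ (D - A)⁻¹ i j := by
  set M := D - A with hM
  have hMsymm : M.IsSymm := hPD.1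
  have hUnit : IsUnit M := hPD.isUnit
  have hinv : M * M⁻¹ = 1 := mul_nonsing_inv M (isUnit_iff_isUnit_det M |>.1 hUnit)
  constructor
  · have := hPD.1.inv
    exact this
  · intro i j
    -- x is column j of M⁻¹
    set x : Fin n → ℝ := M⁻¹ *ᵥ Pi.single j 1 with hx
    have hxi : ∀ k, x k = M⁻¹ k j := by
      intro k; simp [hx, mulVec_single]
    have hMx : M *ᵥ x = Pi.single j 1 := by
      rw [hx, mulVec_mulVec, hinv, one_mulVec]
    -- negative part
    set v : Fin n → ℝ := fun k => max (-(x k)) 0 with hv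
    set u : Fin n → ℝ := fun k => max (x k) 0 with hu
    have hv0 : ∀ k, 0 ≤ v k := fun k => le_max_right _ _
    have hu0 : ∀ k, 0 ≤ u k := fun k => le_max_right _ _
    have huv : ∀ k, u k * v k = 0 := by
      intro k
      rcases le_total (x k) 0 with h | h
      · have : u k = 0 := max_eq_right h
        rw [this, zero_mul]
      · have : v k = 0 := max_eq_right (neg_nonpos.2 h)
        rw [this, mul_zero]
    have hxuv : ∀ k, x k = u k - v k := by
      intro k
      rcases le_total (x k) 0 with h | h
      · rw [hu, hv]; simp [max_eq_right h, max_eq_left (neg_nonneg.2 h)]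
      · rw [hu, hv]; simp [max_eq_left h, max_eq_right (neg_nonpos.2 h)]
    -- key: v ⬝ᵥ (M *ᵥ v) ≤ 0
    have h1 : v ⬝ᵥ (M *ᵥ x) = v j := by
      rw [hMx]; simp [dotProduct, Pi.single_apply, mul_ite]
    have hxfun : x = fun k => u k - v k := funext hxuv
    have hsplit : v ⬝ᵥ (M *ᵥ x) = v ⬝ᵥ (M *ᵥ u) - v ⬝ᵥ (M *ᵥ v) := by
      rw [hxfun]
      have : (fun k => u k - v k) = u - v := rfl
      rw [this, mulVec_sub, dotProduct_sub]
    have hvDu : v ⬝ᵥ (D *ᵥ u) = 0 := by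
      simp only [dotProduct, mulVec, dotProduct]
      rw [Finset.sum_eq_zero]
      intro k _
      rw [Finset.mul_sum, Finset.sum_eq_zero]
      intro l _
      rcases eq_or_ne k l with rfl | hkl
      · have : v k * (D k k * u k) = D k k * (u k * v k) := by ring
        rw [this, huv k, mul_zero]
      · rw [hD hkl, zero_mul, mul_zero]
    have hvAu : 0 ≤ v ⬝ᵥ (A *ᵥ u) := by
      simp only [dotProduct, mulVec, dotProduct]
      apply Finset.sum_nonneg
      intro k _
      apply mul_nonneg (hv0 k)
      apply Finset.sum_nonneg
      intro l _
      exact mul_nonneg (hA0 k l) (hu0 l)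
    have hvMu : v ⬝ᵥ (M *ᵥ u) ≤ 0 := by
      rw [hM, sub_mulVec, dotProduct_sub, hvDu, zero_sub]
      linarith
    have hvMv : v ⬝ᵥ (M *ᵥ v) ≤ 0 := by
      have hvj : 0 ≤ v j := hv0 j
      have := hsplit.symm.trans h1
      linarith
    -- positive definiteness forces v = 0
    have hveq : v = 0 := by
      by_contra hne
      have := hPD.dotProduct_mulVec_pos hne
      simp only [star_trivial] at this
      linarith
    have : v i = 0 := by rw [hveq]; rfl
    have hxi0 : 0 ≤ x i := by
      by_contra h
      push_neg at h
      have : v i = max (-(x i)) 0 := rfl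
      rw [max_eq_left (by linarith)] at this
      rw [hveq] at this
      simp at this
      linarith
    rw [← hxi i]; exact hxi0
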